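/- Let p ≥ 3 be a prime, Π a finite projective plane of order p², c a code word of C(Π)^⊥ of weight w(c) = 2p² − 2p + 2 + ε with 1 ≤ ε ≤ p − 2, let S = supp(c), and for A ∈ S let x_A be the number of 2-secants to S through A. Then for every λ ∈ {1, ..., p−1}: (i) for every A ∈ K_λ, x_A ≤ |K_{p−λ}|; (ii) if |K_{p−λ}| = 2p + 1 − ε, then x_P = 2p + 1 − ε for all P ∈ K_λ; (iii) if x_P = 2p + 1 − ε for some P ∈ K_λ, then |K_{p−λ}| = 2p + 1 − ε, every line through P meeting S in more than one point is a 2-secant or 3-secant to S, and K_{p−λ} is exactly the set of points of S \ {P} lying on 2-secants to S through P; (iv) if |K_{p−λ}| = 2p + 2 − ε, then every P ∈ K_λ lies on exactly 2p + 2 − ε 2-secants, exactly p² − 2p − 2 + ε 3-secants, and exactly one 4-secant to S. -/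

import Mathlib

/-- A projective plane of order `n`, given by an abstract incidence relation `R`. -/
structure IsProjectivePlaneOrder {P L : Type*} (n : ℕ) (R : P → L → Prop) : Prop where
  existsUnique_line : ∀ x y : P, x ≠ y → ∃! l : L, R x l ∧ R y l
  existsUnique_point : ∀ l m : L, l ≠ m → ∃! x : P, R x l ∧ R x m
  quadrangle : ∃ a b c d : P, a ≠ b ∧ a ≠ c ∧ a ≠ d ∧ b ≠ c ∧ b ≠ d ∧ c ≠ d ∧
    ∀ l : L, ¬(R a l ∧ R b l ∧ R c l) ∧ ¬(R a l ∧ R b l ∧ R d l) ∧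
      ¬(R a l ∧ R c l ∧ R d l) ∧ ¬(R b l ∧ R c l ∧ R d l)
  line_card : ∀ l : L, {x | R x l}.ncard = n + 1
  point_card : ∀ x : P, {l | R x l}.ncard = n + 1

/-- A code word of the dual code `C(Π)^⊥`: a function from points to `F_p` summing
to zero on every line. -/
def IsDualCodeWord {P L : Type*} (p : ℕ) (R : P → L → Prop) (c : P → ZMod p) : Prop :=
  ∀ l : L, ∑ᶠ x ∈ {y : P | R y l}, c x = 0

/-- The number of `k`-secants to the point set `S` through the point `A`. -/
noncomputable def nSecants {P L : Type*} (R : P → L → Prop) (S : Set P) (k : ℕ) (A : P) : ℕ :=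
  {l : L | R A l ∧ ({x | R x l} ∩ S).ncard = k}.ncard

noncomputable def fset {α : Type*} [Finite α] (s : Set α) : Finset α := (Set.toFinite s).toFinset

@[simp] lemma mem_fset {α : Type*} [Finite α] {s : Set α} {x : α} : x ∈ fset s ↔ x ∈ s :=
  Set.Finite.mem_toFinset _

lemma ncard_fset {α : Type*} [Finite α] (s : Set α) : s.ncard = (fset s).card :=
  Set.ncard_eq_toFinset_card s _

lemma line_sum {Pt Ln : Type*} [Finite Pt] {p : ℕ} {R : Pt → Ln → Prop}
    {c : Pt → ZMod p} (hc : IsDualCodeWord p R c) (l : Ln) :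
    ∑ x ∈ fset ({x | R x l} ∩ Function.support c), c x = 0 := by
  have h := hc l
  rwa [finsum_mem_eq_sum c (Set.toFinite _)] at h

/-- Every line through a support point meets the support in at least 2 points. -/
lemma two_le_secant {Pt Ln : Type*} [Finite Pt] {p : ℕ} {R : Pt → Ln → Prop}
    {c : Pt → ZMod p} (hc : IsDualCodeWord p R c) {A : Pt} (hA : c A ≠ 0)
    {l : Ln} (hl : R A l) : 2 ≤ ({x | R x l} ∩ Function.support c).ncard := by
  have hAm : A ∈ {x | R x l} ∩ Function.support c := ⟨hl, hA⟩
  by_contra h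
  push_neg at h
  interval_cases hn : ({x | R x l} ∩ Function.support c).ncard
  · exact (Set.ncard_eq_zero (Set.toFinite _)).mp hn |>.subset hAm
  · obtain ⟨b, hb⟩ := Set.ncard_eq_one.mp hn
    have hfs : fset ({x | R x l} ∩ Function.support c) = {A} := by
      ext y
      simp only [mem_fset, hb, Finset.mem_singleton, Set.mem_singleton_iff]
      rw [hb] at hAm
      simp_all
    have := line_sum hc l
    rw [hfs, Finset.sum_singleton] at this
    exact hA this

/-- On a 2-secant through a support point, the second point has the opposite value. -/
lemma two_secant_pair {Pt Ln : Type*} [Finite Pt] {p : ℕ} {R : Pt → Ln → Prop}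
    {c : Pt → ZMod p} (hc : IsDualCodeWord p R c) {A : Pt} (hA : c A ≠ 0)
    {l : Ln} (hl : R A l) (h2 : ({x | R x l} ∩ Function.support c).ncard = 2) :
    ∃ B, B ≠ A ∧ R B l ∧ c B = -c A ∧
      {x | R x l} ∩ Function.support c = {A, B} := by
  classical
  set s := {x | R x l} ∩ Function.support c with hsdef
  have hAm : A ∈ s := ⟨hl, hA⟩
  have hns : ¬ s ⊆ {A} := by
    intro hsub
    have := Set.ncard_le_ncard hsub (Set.finite_singleton A)
    rw [h2, Set.ncard_singleton] at this
    omega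
  obtain ⟨B, hBm, hBA⟩ := Set.not_subset.mp hns
  simp only [Set.mem_singleton_iff] at hBA
  have hs : s = {A, B} := by
    refine (Set.eq_of_subset_of_ncard_le ?_ ?_ (Set.toFinite s)).symm
    · intro y hy
      rcases hy with rfl | rfl
      exacts [hAm, hBm]
    · rw [h2, Set.ncard_pair (Ne.symm hBA)]
  have hfs : fset s = {A, B} := by ext y; simp [hs]
  have hsum := line_sum hc l
  rw [← hsdef, hfs, Finset.sum_pair (Ne.symm hBA)] at hsum
  exact ⟨B, hBA, hBm.1, by linear_combination hsum, hs⟩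

/-- No point of value `-c A` on a 3-secant through `A`. -/
lemma no_opp_on_three_secant {Pt Ln : Type*} [Finite Pt] {p : ℕ} {R : Pt → Ln → Prop}
    {c : Pt → ZMod p} (hc : IsDualCodeWord p R c) {A B : Pt} (hA : c A ≠ 0)
    (hB : c B = -c A) (hBA : B ≠ A) {l : Ln} (hlA : R A l) (hlB : R B l)
    (h3 : ({x | R x l} ∩ Function.support c).ncard = 3) : False := by
  classical
  have hBne : c B ≠ 0 := by rw [hB, neg_ne_zero]; exact hA
  set s := {x | R x l} ∩ Function.support c with hsdef
  have hAm : A ∈ s := ⟨hlA, hA⟩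
  have hBm : B ∈ s := ⟨hlB, hBne⟩
  have hns : ¬ s ⊆ {A, B} := by
    intro hsub
    have := Set.ncard_le_ncard hsub (Set.toFinite _)
    rw [h3, Set.ncard_pair (Ne.symm hBA)] at this
    omega
  obtain ⟨C, hCm, hC⟩ := Set.not_subset.mp hns
  simp only [Set.mem_insert_iff, Set.mem_singleton_iff, not_or] at hC
  obtain ⟨hCA, hCB⟩ := hC
  have hs : s = {A, B, C} := by
    refine (Set.eq_of_subset_of_ncard_le ?_ ?_ (Set.toFinite s)).symm
    · intro y hy
      rcases hy with rfl | rfl | rfl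
      exacts [hAm, hBm, hCm]
    · rw [h3]
      exact le_of_eq (Set.ncard_eq_three.mpr ⟨A, B, C, Ne.symm hBA, Ne.symm hCA,
        Ne.symm hCB, rfl⟩).symm
  have hfs : fset s = {A, B, C} := by ext y; simp [hs]
  have hsum := line_sum hc l
  rw [← hsdef, hfs] at hsum
  rw [Finset.sum_insert (by simp [Ne.symm hBA]; exact fun h => hCA h.symm), Finset.sum_pair (show B ≠ C from fun h => hCB h.symm)] at hsum
  apply hCm.2
  rw [hB] at hsum
  linear_combination hsum

/-- Double counting: summing secant sizes over all lines through `A ∈ S`. -/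
lemma sum_secants {Pt Ln : Type*} [Finite Pt] [Finite Ln] {n : ℕ} {R : Pt → Ln → Prop}
    (hPP : IsProjectivePlaneOrder n R) (S : Set Pt) {A : Pt} (hA : A ∈ S) :
    ∑ l ∈ fset {l | R A l}, ({x | R x l} ∩ S).ncard = S.ncard + n := by
  classical
  have hLn : Nonempty Ln := by
    by_contra h
    have h0 : ({l | R A l} : Set Ln).ncard = 0 := by
      rw [Set.ncard_eq_zero (Set.toFinite _)]
      ext l
      exact (h ⟨l⟩).elim
    rw [hPP.point_card A] at h0
    omega
  set f : Pt → Ln := fun Q => if h : Q ≠ A then (hPP.existsUnique_line Q A h).choose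
    else Classical.arbitrary Ln with hf
  have hfspec : ∀ Q (h : Q ≠ A), (R Q (f Q) ∧ R A (f Q)) ∧ ∀ m, R Q m ∧ R A m → m = f Q := by
    intro Q h
    simp only [hf, dif_pos h]
    exact ⟨(hPP.existsUnique_line Q A h).choose_spec.1,
      fun m hm => (hPP.existsUnique_line Q A h).choose_spec.2 m hm⟩
  have hmap : ∀ Q ∈ fset (S \ {A}), f Q ∈ fset {l | R A l} := by
    intro Q hQ
    simp only [mem_fset, Set.mem_diff, Set.mem_singleton_iff] at hQ
    simp only [mem_fset, Set.mem_setOf_eq]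
    exact (hfspec Q hQ.2).1.2
  have hcount := Finset.card_eq_sum_card_fiberwise hmap
  have hfib : ∀ l ∈ fset {l | R A l},
      ((fset (S \ {A})).filter (fun Q => f Q = l)).card
        = (fset ((({x | R x l} ∩ S) \ {A}))).card := by
    intro l hl
    simp only [mem_fset, Set.mem_setOf_eq] at hl
    congr 1
    ext Q
    simp only [Finset.mem_filter, mem_fset, Set.mem_diff, Set.mem_singleton_iff,
      Set.mem_inter_iff, Set.mem_setOf_eq]
    constructor
    · rintro ⟨⟨hQS, hQA⟩, rfl⟩
      exact ⟨⟨(hfspec Q hQA).1.1, hQS⟩, hQA⟩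
    · rintro ⟨⟨hQl, hQS⟩, hQA⟩
      exact ⟨⟨hQS, hQA⟩, ((hfspec Q hQA).2 l ⟨hQl, hl⟩).symm⟩
  rw [Finset.sum_congr rfl hfib] at hcount
  have hterm : ∀ l ∈ fset {l | R A l},
      ({x | R x l} ∩ S).ncard = (fset ((({x | R x l} ∩ S) \ {A}))).card + 1 := by
    intro l hl
    simp only [mem_fset, Set.mem_setOf_eq] at hl
    rw [← ncard_fset]
    exact (Set.ncard_diff_singleton_add_one (show A ∈ {x | R x l} ∩ S from ⟨hl, hA⟩) (Set.toFinite _)).symm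
  rw [Finset.sum_congr rfl hterm, Finset.sum_add_distrib, Finset.sum_const, smul_eq_mul,
    mul_one, ← hcount]
  have h1 : (S \ {A}).ncard + 1 = S.ncard :=
    Set.ncard_diff_singleton_add_one hA (Set.toFinite _)
  have h2 : (fset {l | R A l}).card = n + 1 := by
    rw [← ncard_fset]; exact hPP.point_card A
  rw [ncard_fset (S \ {A})] at h1
  omega

lemma dist_lemma {Ln : Type*} (s : Finset Ln) (k : Ln → ℕ) (hk : ∀ l ∈ s, 3 ≤ k l) :
    3 * s.card ≤ ∑ l ∈ s, k l ∧
    (∑ l ∈ s, k l = 3 * s.card → ∀ l ∈ s, k l = 3) ∧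
    (∑ l ∈ s, k l = 3 * s.card + 1 →
      ∃ l₀ ∈ s, k l₀ = 4 ∧ ∀ l ∈ s, l ≠ l₀ → k l = 3) := by
  classical
  have hsplit : ∑ l ∈ s, k l = (∑ l ∈ s, (k l - 3)) + 3 * s.card := by
    have : ∀ l ∈ s, k l = (k l - 3) + 3 := fun l hl => by have := hk l hl; omega
    rw [Finset.sum_congr rfl this, Finset.sum_add_distrib, Finset.sum_const, smul_eq_mul,
      mul_comm]
  refine ⟨by omega, ?_, ?_⟩
  · intro hsum l hl
    have hz : ∑ l ∈ s, (k l - 3) = 0 := by omega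
    have := (Finset.sum_eq_zero_iff).mp hz l hl
    have := hk l hl
    omega
  · intro hsum
    have hz : ∑ l ∈ s, (k l - 3) = 1 := by omega
    have hex : ∃ l₀ ∈ s, 1 ≤ k l₀ - 3 := by
      by_contra h
      push_neg at h
      have : ∑ l ∈ s, (k l - 3) = 0 := Finset.sum_eq_zero (fun l hl => by have := h l hl; omega)
      omega
    obtain ⟨l₀, hl₀, hk₀⟩ := hex
    have hrest : ∑ l ∈ s.erase l₀, (k l - 3) = 1 - (k l₀ - 3) := by
      have h := Finset.add_sum_erase s (fun l => k l - 3) hl₀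
      beta_reduce at h
      omega
    have hk₀4 : k l₀ = 4 := by
      have h1 : k l₀ - 3 ≤ 1 := by
        by_contra h
        have h2 := Finset.add_sum_erase s (fun l => k l - 3) hl₀
        beta_reduce at h2
        omega
      have := hk l₀ hl₀
      omega
    refine ⟨l₀, hl₀, hk₀4, fun l hl hne => ?_⟩
    have hz2 : ∑ l ∈ s.erase l₀, (k l - 3) = 0 := by rw [hrest, hk₀4]
    have := (Finset.sum_eq_zero_iff).mp hz2 l (Finset.mem_erase.mpr ⟨hne, hl⟩)
    have := hk l hl
    omega

lemma arith_master (p ε w q t2 t3 tL s2 s3 sL : ℕ)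
    (hp3 : 3 ≤ p) (hε1 : 1 ≤ ε) (hε2 : ε ≤ p - 2) (hq : 2 * p + 3 ≤ q)
    (hw : w = 2 * q - 2 * p + 2 + ε) (hsum : sL = w + q)
    (hsplit : t2 + t3 = tL) (hsumsplit : s2 + s3 = sL)
    (hs2 : s2 = 2 * t2) (hLA : tL = q + 1) (hD1 : 3 * t3 ≤ s3) :
    2 * p + 1 - ε ≤ t2 ∧
    (t2 = 2 * p + 1 - ε → s3 = 3 * t3) ∧
    (t2 = 2 * p + 2 - ε → s3 = 3 * t3 + 1 ∧ t3 - 1 = q - 2 * p - 2 + ε) := by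
  omega

lemma master_lemma {Pt Ln : Type} [Finite Pt] [Finite Ln]
    (p : ℕ) (hp : p.Prime) (hp3 : 3 ≤ p)
    (R : Pt → Ln → Prop) (hPP : IsProjectivePlaneOrder (p ^ 2) R)
    (c : Pt → ZMod p) (hc : IsDualCodeWord p R c)
    (ε : ℕ) (hε1 : 1 ≤ ε) (hε2 : ε ≤ p - 2)
    (hw : (Function.support c).ncard = 2 * p ^ 2 - 2 * p + 2 + ε)
    (a : ZMod p) (ha : a ≠ 0) (P : Pt) (hP : c P = a) :
    nSecants R (Function.support c) 2 P ≤ ({x | c x = -a} : Set Pt).ncard ∧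
    2 * p + 1 - ε ≤ nSecants R (Function.support c) 2 P ∧
    (nSecants R (Function.support c) 2 P = 2 * p + 1 - ε →
      ({x | c x = -a} : Set Pt).ncard = 2 * p + 1 - ε ∧
      (∀ l : Ln, R P l → 2 ≤ ({x | R x l} ∩ Function.support c).ncard →
          ({x | R x l} ∩ Function.support c).ncard = 2 ∨
            ({x | R x l} ∩ Function.support c).ncard = 3) ∧
      ({x | c x = -a} : Set Pt) =
        {x | x ∈ Function.support c ∧ x ≠ P ∧
          ∃ l : Ln, R P l ∧ R x l ∧ ({y | R y l} ∩ Function.support c).ncard = 2}) ∧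
    (nSecants R (Function.support c) 2 P = 2 * p + 2 - ε →
      nSecants R (Function.support c) 3 P = p ^ 2 - 2 * p - 2 + ε ∧
      nSecants R (Function.support c) 4 P = 1) := by
  classical
  haveI : Fact p.Prime := ⟨hp⟩
  set S := Function.support c with hS
  set q := p ^ 2 with hqdef
  clear_value q
  have hq : 2 * p + 3 ≤ q := by
    rw [hqdef, pow_two]
    nlinarith
  have hodd : a ≠ -a := by
    intro h
    have h2 : ((2 : ℕ) : ZMod p) * a = 0 := by push_cast; linear_combination h
    rcases mul_eq_zero.mp h2 with h2' | h2'
    · have hdvd := (ZMod.natCast_eq_zero_iff 2 p).mp h2'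
      have := Nat.le_of_dvd (by norm_num) hdvd
      omega
    · exact ha h2'
  have hPne : c P ≠ 0 := by rw [hP]; exact ha
  have hPS : P ∈ S := hPne
  set k : Ln → ℕ := fun l => ({x | R x l} ∩ S).ncard with hk
  have hkdef : ∀ l, k l = ({x | R x l} ∩ S).ncard := fun l => rfl
  set LA : Finset Ln := fset {l | R P l} with hLA
  have hLAmem : ∀ l, l ∈ LA ↔ R P l := fun l => by simp [hLA]
  have hLAcard : LA.card = q + 1 := by
    rw [hLA, ← ncard_fset]; exact hPP.point_card P
  have hsum : ∑ l ∈ LA, k l = S.ncard + q := sum_secants hPP S hPS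
  have hk2 : ∀ l ∈ LA, 2 ≤ k l := fun l hl => two_le_secant hc hPne ((hLAmem l).mp hl)
  set T2 : Finset Ln := LA.filter (fun l => k l = 2) with hT2
  set T3 : Finset Ln := LA.filter (fun l => k l ≠ 2) with hT3
  have hT2mem : ∀ l, l ∈ T2 ↔ R P l ∧ k l = 2 := fun l => by
    simp [hT2, hLAmem, Finset.mem_filter]
  have hT3mem : ∀ l, l ∈ T3 ↔ R P l ∧ k l ≠ 2 := fun l => by
    simp [hT3, hLAmem, Finset.mem_filter]
  have hnsec : ∀ m : ℕ, nSecants R S m P = (LA.filter (fun l => k l = m)).card := by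
    intro m
    rw [nSecants, ncard_fset]
    congr 1
    ext l
    simp [Finset.mem_filter, hLAmem, hk]
  have hx : nSecants R S 2 P = T2.card := hnsec 2
  have hsplit : T2.card + T3.card = LA.card := Finset.card_filter_add_card_filter_not _
  have hsumsplit : ∑ l ∈ T2, k l + ∑ l ∈ T3, k l = ∑ l ∈ LA, k l :=
    Finset.sum_filter_add_sum_filter_not _ _ _
  have hsum2 : ∑ l ∈ T2, k l = 2 * T2.card := by
    rw [Finset.sum_congr rfl (fun l hl => (Finset.mem_filter.mp hl).2),
      Finset.sum_const, smul_eq_mul, mul_comm]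
  have hk3 : ∀ l ∈ T3, 3 ≤ k l := by
    intro l hl
    obtain ⟨hRPl, hlne⟩ := (hT3mem l).mp hl
    have := hk2 l ((hLAmem l).mpr hRPl)
    omega
  obtain ⟨hD1, hD2, hD3⟩ := dist_lemma T3 k hk3
  -- make everything opaque
  clear_value LA T2 T3
  clear hT2 hT3 hLA
  -- the "second point" map on 2-secants
  have hgex : ∃ g : Ln → Pt, ∀ l ∈ T2, g l ≠ P ∧ R (g l) l ∧ c (g l) = -a ∧
      {x | R x l} ∩ S = {P, g l} := by
    refine ⟨fun l => if h : R P l ∧ k l = 2 then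
      (two_secant_pair hc hPne h.1 ((hkdef l) ▸ h.2)).choose else P, ?_⟩
    intro l hl
    rw [hT2mem] at hl
    have hval := (two_secant_pair hc hPne hl.1 ((hkdef l) ▸ hl.2)).choose_spec
    simp only [dif_pos hl]
    exact ⟨hval.1, hval.2.1, by rw [hval.2.2.1, hP], hval.2.2.2⟩
  obtain ⟨g, hgspec⟩ := hgex
  -- Part 1 : upper bound
  have part1 : T2.card ≤ ({x | c x = -a} : Set Pt).ncard := by
    rw [ncard_fset]
    apply Finset.card_le_card_of_injOn g
    · intro l hl
      simp only [Finset.mem_coe, mem_fset, Set.mem_setOf_eq]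
      exact (hgspec l hl).2.2.1
    · intro l1 hl1 l2 hl2 heq
      have hl1' : l1 ∈ T2 := hl1
      have hl2' : l2 ∈ T2 := hl2
      have h1 := hgspec l1 hl1'
      have h2 := hgspec l2 hl2'
      exact (hPP.existsUnique_line (g l1) P h1.1).unique
        ⟨h1.2.1, ((hT2mem l1).mp hl1').1⟩
        ⟨heq ▸ h2.2.1, ((hT2mem l2).mp hl2').1⟩
  -- a pencil-line selector through any point `Q ≠ P`
  have hfex : ∃ f : Pt → Ln, ∀ Q (h : Q ≠ P),
      (R Q (f Q) ∧ R P (f Q)) ∧ ∀ m, R Q m ∧ R P m → m = f Q := by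
    obtain ⟨l0, -⟩ := Finset.card_pos.mp (show 0 < LA.card by rw [hLAcard]; exact Nat.succ_pos q)
    refine ⟨fun Q => if h : Q ≠ P then (hPP.existsUnique_line Q P h).choose else l0, ?_⟩
    intro Q h
    simp only [dif_pos h]
    exact ⟨(hPP.existsUnique_line Q P h).choose_spec.1,
      fun m hm => (hPP.existsUnique_line Q P h).choose_spec.2 m hm⟩
  obtain ⟨f, hfspec⟩ := hfex
  have hKQ : ∀ Q : Pt, c Q = -a → c Q ≠ 0 ∧ Q ≠ P := by
    intro Q hQ
    refine ⟨by rw [hQ]; exact neg_ne_zero.mpr ha, ?_⟩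
    rintro rfl
    rw [hP] at hQ
    exact hodd hQ
  -- Part 2 : lower bound
  obtain ⟨part2, harith3, harith4⟩ := arith_master p ε S.ncard q T2.card T3.card LA.card
    (∑ l ∈ T2, k l) (∑ l ∈ T3, k l) (∑ l ∈ LA, k l) hp3 hε1 hε2 hq hw hsum hsplit
    hsumsplit hsum2 hLAcard hD1
  -- Part 3
  have part3 : T2.card = 2 * p + 1 - ε →
      ({x | c x = -a} : Set Pt).ncard = 2 * p + 1 - ε ∧
      (∀ l : Ln, R P l → 2 ≤ ({x | R x l} ∩ S).ncard →
          ({x | R x l} ∩ S).ncard = 2 ∨ ({x | R x l} ∩ S).ncard = 3) ∧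
      ({x | c x = -a} : Set Pt) =
        {x | x ∈ S ∧ x ≠ P ∧
          ∃ l : Ln, R P l ∧ R x l ∧ ({y | R y l} ∩ S).ncard = 2} := by
    intro hx3
    have hsum3 : ∑ l ∈ T3, k l = 3 * T3.card := harith3 hx3
    have hT3all : ∀ l ∈ T3, k l = 3 := hD2 hsum3
    have conc2 : ∀ l : Ln, R P l → 2 ≤ ({x | R x l} ∩ S).ncard →
        ({x | R x l} ∩ S).ncard = 2 ∨ ({x | R x l} ∩ S).ncard = 3 := by
      intro l hl _
      by_cases h2 : k l = 2
      · exact Or.inl ((hkdef l) ▸ h2)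
      · exact Or.inr ((hkdef l) ▸ hT3all l ((hT3mem l).mpr ⟨hl, h2⟩))
    -- every point of K lies on a 2-secant through P
    have hKf : ∀ Q : Pt, c Q = -a → f Q ∈ T2 ∧ R Q (f Q) ∧ R P (f Q) := by
      intro Q hQ
      obtain ⟨hQne, hQP⟩ := hKQ Q hQ
      obtain ⟨⟨hRQ, hRP⟩, -⟩ := hfspec Q hQP
      have h2 : k (f Q) = 2 := by
        by_contra h2
        have h3 := hT3all (f Q) ((hT3mem (f Q)).mpr ⟨hRP, h2⟩)
        rw [hkdef] at h3
        exact no_opp_on_three_secant hc hPne (by rw [hQ, hP]) hQP hRP hRQ h3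
      exact ⟨(hT2mem (f Q)).mpr ⟨hRP, h2⟩, hRQ, hRP⟩
    have hKle : ({x | c x = -a} : Set Pt).ncard ≤ T2.card := by
      rw [ncard_fset]
      apply Finset.card_le_card_of_injOn f
      · intro Q hQ
        simp only [Finset.mem_coe, mem_fset, Set.mem_setOf_eq] at hQ
        exact (hKf Q hQ).1
      · intro Q1 hQ1 Q2 hQ2 heq
        have hQ1 : c Q1 = -a := by simpa using (mem_fset.mp hQ1)
        have hQ2 : c Q2 = -a := by simpa using (mem_fset.mp hQ2)
        have h1 := hKf Q1 hQ1
        have h2 := hKf Q2 hQ2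
        have hpair := hgspec (f Q1) h1.1
        have e1 : Q1 = g (f Q1) := by
          have hm : Q1 ∈ {x | R x (f Q1)} ∩ S := ⟨h1.2.1, (hKQ Q1 hQ1).1⟩
          rw [hpair.2.2.2] at hm
          rcases hm with h | h
          · exact absurd h (hKQ Q1 hQ1).2
          · exact h
        have e2 : Q2 = g (f Q1) := by
          have hm : Q2 ∈ {x | R x (f Q1)} ∩ S := ⟨heq ▸ h2.2.1, (hKQ Q2 hQ2).1⟩
          rw [hpair.2.2.2] at hm
          rcases hm with h | h
          · exact absurd h (hKQ Q2 hQ2).2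
          · exact h
        rw [e1, e2]
    have hKeq : ({x | c x = -a} : Set Pt).ncard = 2 * p + 1 - ε :=
      Nat.le_antisymm (hx3 ▸ hKle) (hx3 ▸ part1)
    refine ⟨hKeq, conc2, ?_⟩
    ext Q
    simp only [Set.mem_setOf_eq]
    constructor
    · intro hQ
      obtain ⟨hQne, hQP⟩ := hKQ Q hQ
      obtain ⟨hT2f, hRQ, hRP⟩ := hKf Q hQ
      exact ⟨hQne, hQP, f Q, hRP, hRQ, (hkdef _) ▸ ((hT2mem (f Q)).mp hT2f).2⟩
    · rintro ⟨hQS, hQP, l, hRP, hRQ, h2⟩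
      have hl2 : l ∈ T2 := (hT2mem l).mpr ⟨hRP, (hkdef l) ▸ h2⟩
      have hpair := hgspec l hl2
      have hm : Q ∈ {x | R x l} ∩ S := ⟨hRQ, hQS⟩
      rw [hpair.2.2.2] at hm
      rcases hm with h | h
      · exact absurd h hQP
      · rw [h]
        exact hpair.2.2.1
  -- Part 4
  have part4 : T2.card = 2 * p + 2 - ε →
      nSecants R S 3 P = q - 2 * p - 2 + ε ∧ nSecants R S 4 P = 1 := by
    intro hx4
    have hsum4 : ∑ l ∈ T3, k l = 3 * T3.card + 1 := (harith4 hx4).1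
    obtain ⟨l₀, hl₀T3, hkl₀, hrest⟩ := hD3 hsum4
    have hfilter3 : LA.filter (fun l => k l = 3) = T3.erase l₀ := by
      ext l
      simp only [Finset.mem_filter, Finset.mem_erase, hLAmem, hT3mem]
      constructor
      · rintro ⟨hRPl, h3⟩
        refine ⟨?_, hRPl, by omega⟩
        rintro rfl
        omega
      · rintro ⟨hne, hRPl, hk2l⟩
        exact ⟨hRPl, hrest l ((hT3mem l).mpr ⟨hRPl, hk2l⟩) hne⟩
    have hfilter4 : LA.filter (fun l => k l = 4) = {l₀} := by
      ext l
      simp only [Finset.mem_filter, Finset.mem_singleton, hLAmem]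
      constructor
      · rintro ⟨hRPl, h4⟩
        by_contra hne
        have := hrest l ((hT3mem l).mpr ⟨hRPl, by omega⟩) hne
        omega
      · rintro rfl
        exact ⟨((hT3mem _).mp hl₀T3).1, hkl₀⟩
    constructor
    · rw [hnsec 3, hfilter3, Finset.card_erase_of_mem hl₀T3]
      exact (harith4 hx4).2
    · rw [hnsec 4, hfilter4, Finset.card_singleton]
  refine ⟨by rw [hx]; exact part1, by rw [hx]; exact part2, ?_, ?_⟩
  · intro h
    rw [hx] at h
    exact part3 h
  · intro h
    rw [hx] at h
    exact part4 h

/-- Relations between the number of `2`-secants through points of `K_λ` and the size of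
`K_{p-λ}`, for a code word of weight `2p² - 2p + 2 + ε`. -/
theorem two_secants_vs_opposite_colour {Pt Ln : Type} [Finite Pt] [Finite Ln]
    (p : ℕ) (hp : p.Prime) (hp3 : 3 ≤ p)
    (R : Pt → Ln → Prop) (hPP : IsProjectivePlaneOrder (p ^ 2) R)
    (c : Pt → ZMod p) (hc : IsDualCodeWord p R c)
    (ε : ℕ) (hε1 : 1 ≤ ε) (hε2 : ε ≤ p - 2)
    (hw : (Function.support c).ncard = 2 * p ^ 2 - 2 * p + 2 + ε)
    (a : ZMod p) (ha : a ≠ 0) :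
    (∀ A : Pt, c A = a →
        nSecants R (Function.support c) 2 A ≤ ({x | c x = -a} : Set Pt).ncard) ∧
    (({x | c x = -a} : Set Pt).ncard = 2 * p + 1 - ε →
        ∀ P : Pt, c P = a → nSecants R (Function.support c) 2 P = 2 * p + 1 - ε) ∧
    (∀ P : Pt, c P = a → nSecants R (Function.support c) 2 P = 2 * p + 1 - ε →
        ({x | c x = -a} : Set Pt).ncard = 2 * p + 1 - ε ∧
        (∀ l : Ln, R P l → 2 ≤ ({x | R x l} ∩ Function.support c).ncard →
            ({x | R x l} ∩ Function.support c).ncard = 2 ∨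
              ({x | R x l} ∩ Function.support c).ncard = 3) ∧
        ({x | c x = -a} : Set Pt) =
          {x | x ∈ Function.support c ∧ x ≠ P ∧
            ∃ l : Ln, R P l ∧ R x l ∧ ({y | R y l} ∩ Function.support c).ncard = 2}) ∧
    (({x | c x = -a} : Set Pt).ncard = 2 * p + 2 - ε →
        ∀ P : Pt, c P = a →
          nSecants R (Function.support c) 2 P = 2 * p + 2 - ε ∧
          nSecants R (Function.support c) 3 P = p ^ 2 - 2 * p - 2 + ε ∧
          nSecants R (Function.support c) 4 P = 1) := by
  refine ⟨?_, ?_, ?_, ?_⟩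
  · intro A hA
    exact (master_lemma p hp hp3 R hPP c hc ε hε1 hε2 hw a ha A hA).1
  · intro hK P hP
    obtain ⟨m1, m2, -, -⟩ := master_lemma p hp hp3 R hPP c hc ε hε1 hε2 hw a ha P hP
    exact Nat.le_antisymm (hK ▸ m1) m2
  · intro P hP hx
    obtain ⟨-, -, m3, -⟩ := master_lemma p hp hp3 R hPP c hc ε hε1 hε2 hw a ha P hP
    exact m3 hx
  · intro hK P hP
    obtain ⟨m1, m2, m3, m4⟩ := master_lemma p hp hp3 R hPP c hc ε hε1 hε2 hw a ha P hP
    have hx : nSecants R (Function.support c) 2 P = 2 * p + 2 - ε := by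
      have h1 : nSecants R (Function.support c) 2 P ≤ 2 * p + 2 - ε := hK ▸ m1
      by_contra hne
      have h2 : nSecants R (Function.support c) 2 P = 2 * p + 1 - ε := by omega
      have h3 := (m3 h2).1
      omega
    exact ⟨hx, (m4 hx).1, (m4 hx).2⟩
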